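/- In a Noetherian local ring of Krull dimension at least 3, for any prime ideal q of height 3 there exist infinitely many prime ideals p ⊆ q with height p = 2. -/

import Mathlib

open Ideal

section Artinian

variable {S : Type*} [CommRing S]

/-- A Noetherian module killed by a maximal ideal is Artinian. -/
lemma isArtinian_of_torsion_maximal {J : Ideal S} (hJ : J.IsMaximal)
    (M : Type*) [AddCommGroup M] [Module S M] [IsNoetherian S M]
    (hJM : ∀ r ∈ J, ∀ m : M, r • m = 0) : IsArtinian S M := by
  have hT : Module.IsTorsionBySet S M (J : Set S) := fun x r => hJM r r.2 x
  letI : Module (S ⧸ J) M := hT.module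
  haveI tower : IsScalarTower S (S ⧸ J) M := hT.isScalarTower
  letI : Field (S ⧸ J) := Ideal.Quotient.field J
  haveI : IsNoetherian (S ⧸ J) M := isNoetherian_of_tower S inferInstance
  haveI hart : IsArtinian (S ⧸ J) M := by
    have h1 : IsArtinian (S ⧸ J) (⊤ : Submodule (S ⧸ J) M) :=
      isArtinian_of_fg_of_artinian ⊤ (IsNoetherian.noetherian ⊤)
    exact isArtinian_of_linearEquiv (Submodule.topEquiv)
  -- transfer well-foundedness back down along the embedding of submodule lattices
  let e : Submodule S M ↪o Submodule (S ⧸ J) M :=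
    { toFun := fun N =>
        { carrier := N
          add_mem' := fun ha hb => N.add_mem ha hb
          zero_mem' := N.zero_mem
          smul_mem' := by
            rintro ⟨c⟩ x hx
            exact N.smul_mem c hx }
      inj' := by
        intro N N' h
        ext x
        exact SetLike.ext_iff.mp h x
      map_rel_iff' := Iff.rfl }
  exact ⟨e.ltEmbedding.wellFounded hart.wf⟩

end Artinian

section Artinian2
variable {S : Type*} [CommRing S]

/-- A Noetherian module killed by a power of a maximal ideal is Artinian. -/
lemma isArtinian_of_pow_maximal_smul_eq_bot {J : Ideal S} (hJ : J.IsMaximal) (k : ℕ) :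
    ∀ (M : Type*) [AddCommGroup M] [Module S M] [IsNoetherian S M],
      J ^ k • (⊤ : Submodule S M) = ⊥ → IsArtinian S M := by
  induction k with
  | zero =>
    intro M _ _ _ h
    rw [pow_zero, Ideal.one_eq_top, Submodule.top_smul] at h
    have : Subsingleton M := by
      constructor
      intro a b
      have ha : a ∈ (⊥ : Submodule S M) := h ▸ Submodule.mem_top
      have hb : b ∈ (⊥ : Submodule S M) := h ▸ Submodule.mem_top
      rw [Submodule.mem_bot] at ha hb
      rw [ha, hb]
    exact isArtinian_of_finite
  | succ k ih =>
    intro M _ _ _ h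
    set N : Submodule S M := J • ⊤ with hN
    -- N is Artinian by induction
    haveI hart1 : IsArtinian S N := by
      apply ih N
      apply Submodule.map_injective_of_injective N.injective_subtype
      rw [Submodule.map_smul'', Submodule.map_bot, Submodule.map_top, Submodule.range_subtype]
      rw [hN, ← Submodule.smul_assoc, Ideal.smul_eq_mul, ← pow_succ, h]
    -- M ⧸ N is killed by J
    haveI hart2 : IsArtinian S (M ⧸ N) := by
      apply isArtinian_of_torsion_maximal hJ
      intro r hr m
      obtain ⟨x, rfl⟩ := N.mkQ_surjective m
      show r • N.mkQ x = 0
      rw [← N.mkQ.map_smul]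
      rw [Submodule.mkQ_apply, Submodule.Quotient.mk_eq_zero]
      exact Submodule.smul_mem_smul hr Submodule.mem_top
    exact isArtinian_of_range_eq_ker N.subtype N.mkQ
      (by rw [Submodule.range_subtype, Submodule.ker_mkQ])

end Artinian2

/-- Krull's principal ideal theorem, local case: if the maximal ideal of a Noetherian local
ring is minimal over a principal ideal, there is no chain `p' < p <` maximal ideal. -/
theorem pit_local (S : Type*) [CommRing S] [IsNoetherianRing S] [IsLocalRing S] (x : S)
    (hmin : IsLocalRing.maximalIdeal S ∈ (Ideal.span {x}).minimalPrimes)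
    (p p' : Ideal S) (hp : p.IsPrime) (hp' : p'.IsPrime)
    (hlt : p < IsLocalRing.maximalIdeal S) (hlt' : p' < p) : False := by
  haveI := hp
  set q := IsLocalRing.maximalIdeal S with hqdef
  -- x ∉ p
  have hxp : x ∉ p := by
    intro hx
    exact hlt.not_ge (hmin.2 ⟨hp, ((Ideal.span_singleton_le_iff_mem p).mpr hx)⟩ hlt.le)
  -- every prime containing span {x} contains q
  have hq_le : ∀ P : Ideal S, P.IsPrime → Ideal.span {x} ≤ P → q ≤ P := by
    intro P hP hxP
    obtain ⟨m, hm, hmP⟩ := Ideal.exists_minimalPrimes_le (J := P) hxP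
    have hmq : m ≤ q := IsLocalRing.le_maximalIdeal hm.1.1.ne_top
    exact (hmin.2 hm.1 hmq).trans hmP
  -- the radical of (x) is q
  have hrad : q ≤ (Ideal.span {x}).radical := by
    rw [Ideal.radical_eq_sInf]
    exact le_sInf fun P hP => hq_le P hP.2 hP.1
  obtain ⟨k, hk⟩ : ∃ k, q ^ k ≤ Ideal.span {x} :=
    Ideal.exists_pow_le_of_le_radical_of_fg hrad (IsNoetherian.noetherian _)
  -- the quotient S ⧸ (x) is Artinian
  let M := S ⧸ (Ideal.span {x} : Ideal S)
  haveI : IsArtinian S M := by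
    apply isArtinian_of_pow_maximal_smul_eq_bot (IsLocalRing.maximalIdeal.isMaximal S) k
    rw [eq_bot_iff]
    refine Submodule.smul_le.mpr fun r hr m _ => ?_
    obtain ⟨y, rfl⟩ := (Ideal.span {x} : Ideal S).mkQ_surjective m
    rw [Submodule.mem_bot, ← map_smul, Submodule.mkQ_apply, Submodule.Quotient.mk_eq_zero]
    exact (Ideal.span {x}).mul_mem_right y (hk hr)
  -- symbolic powers of p
  let Rp := Localization.AtPrime p
  let f := algebraMap S Rp
  let In : ℕ → Ideal S := fun n => ((Ideal.map f p) ^ n).comap f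
  have hIanti : ∀ n, In (n + 1) ≤ In n :=
    fun n => Ideal.comap_mono (Ideal.pow_le_pow_right (Nat.le_succ n))
  -- stabilization modulo (x)
  have hIanti' : Antitone In := antitone_nat_of_succ_le hIanti
  obtain ⟨n, hn⟩ := IsArtinian.monotone_stabilizes (R := S) (M := M)
    ⟨fun n => OrderDual.toDual (Submodule.map (Ideal.span {x} : Ideal S).mkQ (In n)),
     fun a b hab => Submodule.map_mono (hIanti' hab)⟩
  have key : In n ⊔ Ideal.span {x} = In (n + 1) ⊔ Ideal.span {x} := by
    have h1 : Submodule.map (Ideal.span {x} : Ideal S).mkQ (In n)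
        = Submodule.map (Ideal.span {x} : Ideal S).mkQ (In (n + 1)) :=
      hn (n + 1) (Nat.le_succ n)
    have h2 := congrArg (Submodule.comap (Ideal.span {x} : Ideal S).mkQ) h1
    rwa [Submodule.comap_map_mkQ, Submodule.comap_map_mkQ,
      sup_comm (Ideal.span {x} : Ideal S) (In n),
      sup_comm (Ideal.span {x} : Ideal S) (In (n + 1))] at h2
  -- In n ≤ In (n+1) ⊔ (x) • In n
  have hxunit : IsUnit (f x) := (IsLocalization.AtPrime.isUnit_to_map_iff Rp p x).mpr hxp
  have step : In n ≤ In (n + 1) ⊔ (Ideal.span {x}) • In n := by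
    intro a ha
    have ha' : a ∈ In (n + 1) ⊔ Ideal.span {x} := key ▸ Submodule.mem_sup_left ha
    obtain ⟨b, hb, c', hc', rfl⟩ := Submodule.mem_sup.mp ha'
    obtain ⟨c, rfl⟩ := Ideal.mem_span_singleton'.mp hc'
    have hcx : c * x ∈ In n := by
      have : b + c * x - b ∈ In n := Submodule.sub_mem _ ha (hIanti n hb)
      simpa using this
    have hc : c ∈ In n := by
      have h1 : f (c * x) ∈ (Ideal.map f p) ^ n := hcx
      have h2 := Ideal.mul_mem_right (↑hxunit.unit⁻¹) _ h1
      have h3 : f (c * x) * ↑hxunit.unit⁻¹ = f c := by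
        rw [_root_.map_mul, mul_assoc, IsUnit.mul_val_inv, mul_one]
      rw [h3] at h2
      exact h2
    refine Submodule.add_mem_sup hb ?_
    rw [Ideal.smul_eq_mul]
    rw [mul_comm c x]
    exact Ideal.mul_mem_mul (Ideal.mem_span_singleton_self x) hc
  -- Nakayama: In n = In (n+1)
  have hjac : Ideal.span {x} ≤ Ideal.jacobson ⊥ := by
    rw [IsLocalRing.jacobson_eq_maximalIdeal ⊥ bot_ne_top]
    exact hmin.1.2
  have heq : In n = In (n + 1) :=
    le_antisymm (Submodule.le_of_le_smul_of_le_jacobson_bot (IsNoetherian.noetherian _)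
      hjac step) (hIanti n)
  -- push to the localization: (pRp)^n = (pRp)^(n+1)
  haveI : IsNoetherianRing Rp := IsLocalization.isNoetherianRing p.primeCompl Rp inferInstance
  have heq' : (Ideal.map f p) ^ n = (Ideal.map f p) ^ (n + 1) := by
    have := congrArg (Ideal.map f) heq
    rwa [IsLocalization.map_comap p.primeCompl Rp, IsLocalization.map_comap p.primeCompl Rp]
      at this
  -- Nakayama in Rp : (pRp)^n = 0
  haveI : IsLocalRing Rp := IsLocalization.AtPrime.isLocalRing Rp p
  have hmax : Ideal.map f p = IsLocalRing.maximalIdeal Rp :=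
    Localization.AtPrime.map_eq_maximalIdeal
  have hbot : (Ideal.map f p) ^ n = ⊥ := by
    apply Submodule.eq_bot_of_le_smul_of_le_jacobson_bot (Ideal.map f p)
    · exact IsNoetherian.noetherian _
    · calc (Ideal.map f p) ^ n = (Ideal.map f p) ^ (n + 1) := heq'
        _ ≤ Ideal.map f p • (Ideal.map f p) ^ n := by
            rw [Ideal.smul_eq_mul, pow_succ']
    · rw [IsLocalRing.jacobson_eq_maximalIdeal ⊥ bot_ne_top, hmax]
  -- contradiction with p' < p
  have hdisj : Disjoint (p.primeCompl : Set S) (p' : Set S) :=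
    Set.disjoint_left.mpr fun r hr hr' => hr (hlt'.le hr')
  have hP'prime : (Ideal.map f p').IsPrime :=
    IsLocalization.isPrime_of_isPrime_disjoint p.primeCompl Rp p' hp' hdisj
  have hcomap : (Ideal.map f p').comap f = p' :=
    IsLocalization.comap_map_of_isPrime_disjoint p.primeCompl Rp hp' hdisj
  have hle : Ideal.map f p ≤ Ideal.map f p' := by
    intro y hy
    have h1 : y ^ n ∈ (⊥ : Ideal Rp) := hbot ▸ Ideal.pow_mem_pow hy n
    have h2 : y ^ n ∈ Ideal.map f p' := (bot_le : (⊥ : Ideal Rp) ≤ _) h1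
    exact hP'prime.mem_of_pow_mem n h2
  have : p ≤ p' := by
    calc p ≤ (Ideal.map f p).comap f := Ideal.le_comap_map
    _ ≤ (Ideal.map f p').comap f := Ideal.comap_mono hle
    _ = p' := hcomap
  exact hlt'.not_ge this

/-- Krull's principal ideal theorem: a prime minimal over a principal ideal has no chain
of two primes strictly below it. -/
theorem pit {R : Type*} [CommRing R] [IsNoetherianRing R] (x : R) {q p p' : Ideal R}
    (hq : q ∈ (Ideal.span {x}).minimalPrimes) (hp : p.IsPrime) (hp' : p'.IsPrime)
    (h2 : p < q) (h1 : p' < p) : False := by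
  haveI hqp : q.IsPrime := hq.1.1
  let S := Localization.AtPrime q
  let f := algebraMap R S
  haveI : IsNoetherianRing S := IsLocalization.isNoetherianRing q.primeCompl S inferInstance
  have hxq : x ∈ q := hq.1.2 (Ideal.mem_span_singleton_self x)
  have hmapq : Ideal.map f q = IsLocalRing.maximalIdeal S :=
    Localization.AtPrime.map_eq_maximalIdeal
  have hmin : IsLocalRing.maximalIdeal S ∈ (Ideal.span {f x}).minimalPrimes := by
    constructor
    · refine ⟨(IsLocalRing.maximalIdeal.isMaximal S).isPrime, ?_⟩
      rw [Ideal.span_singleton_le_iff_mem, ← hmapq]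
      exact Ideal.mem_map_of_mem f hxq
    · rintro Q ⟨hQ, hxQ⟩ hQle
      have hQ0le : Q.comap f ≤ q := by
        have := Ideal.comap_mono (f := f) hQle
        exact this.trans (IsLocalization.AtPrime.comap_maximalIdeal S q).le
      haveI hQ0prime : (Q.comap f).IsPrime := hQ.comap f
      have hq_le_Q0 : q ≤ Q.comap f := by
        refine hq.2 ⟨hQ0prime, ?_⟩ hQ0le
        rw [Ideal.span_singleton_le_iff_mem, Ideal.mem_comap]
        exact hxQ (Ideal.mem_span_singleton_self (f x))
      calc IsLocalRing.maximalIdeal S = Ideal.map f q := hmapq.symm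
        _ ≤ Ideal.map f (Q.comap f) := Ideal.map_mono hq_le_Q0
        _ = Q := IsLocalization.map_comap q.primeCompl S Q
  have hdisj : Disjoint (q.primeCompl : Set R) (p : Set R) :=
    Set.disjoint_left.mpr fun r hr hr' => hr (h2.le hr')
  have hdisj' : Disjoint (q.primeCompl : Set R) (p' : Set R) :=
    Set.disjoint_left.mpr fun r hr hr' => hr (h2.le (h1.le hr'))
  have hPprime : (Ideal.map f p).IsPrime :=
    IsLocalization.isPrime_of_isPrime_disjoint q.primeCompl S p hp hdisj
  have hP'prime : (Ideal.map f p').IsPrime :=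
    IsLocalization.isPrime_of_isPrime_disjoint q.primeCompl S p' hp' hdisj'
  have hcomapP : (Ideal.map f p).comap f = p :=
    IsLocalization.comap_map_of_isPrime_disjoint q.primeCompl S hp hdisj
  have hcomapP' : (Ideal.map f p').comap f = p' :=
    IsLocalization.comap_map_of_isPrime_disjoint q.primeCompl S hp' hdisj'
  have hPlt : Ideal.map f p < IsLocalRing.maximalIdeal S := by
    refine lt_of_le_of_ne (hmapq ▸ Ideal.map_mono h2.le) fun h => h2.ne ?_
    rw [← hcomapP, h]; exact IsLocalization.AtPrime.comap_maximalIdeal S q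
  have hPP' : Ideal.map f p' < Ideal.map f p := by
    refine lt_of_le_of_ne (Ideal.map_mono h1.le) fun h => h1.ne ?_
    rw [← hcomapP', h, hcomapP]
  exact pit_local S (f x) hmin (Ideal.map f p) (Ideal.map f p') hPprime hP'prime hPlt hPP'

/-- In a Noetherian ring, if there is a prime strictly between `p1 < Q`, then there are
infinitely many primes strictly between them. -/
theorem infinite_primes_between {R : Type*} [CommRing R] [IsNoetherianRing R]
    {p1 p2 Q : Ideal R} (h1 : p1.IsPrime) (h2 : p2.IsPrime) (hQ : Q.IsPrime)
    (l1 : p1 < p2) (l2 : p2 < Q) :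
    {r : Ideal R | r.IsPrime ∧ p1 < r ∧ r < Q}.Infinite := by
  haveI := h1
  intro hfin
  set T := {r : Ideal R | r.IsPrime ∧ p1 < r ∧ r < Q} with hT
  have hfin' : (T ∪ {p1}).Finite := hfin.union (Set.finite_singleton p1)
  set F := hfin'.toFinset with hF
  have hmemF : ∀ i ∈ F, i.IsPrime := by
    intro i hi
    rw [hF, Set.Finite.mem_toFinset] at hi
    rcases hi with hi | hi
    · exact hi.1
    · rwa [Set.mem_singleton_iff.mp hi]
  have hnotle : ¬ ∃ i ∈ F, Q ≤ i := by
    rintro ⟨i, hi, hle⟩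
    rw [hF, Set.Finite.mem_toFinset] at hi
    rcases hi with hi | hi
    · exact hi.2.2.not_ge hle
    · rw [Set.mem_singleton_iff.mp hi] at hle
      exact (l1.trans l2).not_ge hle
  have hsub : ¬ ((Q : Set R) ⊆ ⋃ i ∈ (↑F : Set (Ideal R)), (i : Set R)) := by
    rw [Ideal.subset_union_prime p1 p1 (fun i hi _ _ => hmemF i hi)]
    exact hnotle
  obtain ⟨x, hxQ, hxF⟩ := Set.not_subset.mp hsub
  have hxnot : ∀ i ∈ F, x ∉ i := by
    intro i hi hxi
    exact hxF (Set.mem_biUnion hi hxi)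
  have hp1F : p1 ∈ F := by
    rw [hF, Set.Finite.mem_toFinset]
    exact Or.inr rfl
  -- a minimal prime over p1 + (x) inside Q
  have hIQ : p1 ⊔ Ideal.span {x} ≤ Q := by
    refine sup_le (l1.le.trans l2.le) ?_
    rwa [Ideal.span_singleton_le_iff_mem]
  obtain ⟨r, hr, hrQ⟩ := Ideal.exists_minimalPrimes_le (J := Q) hIQ
  haveI hrprime : r.IsPrime := hr.1.1
  have hxr : x ∈ r := hr.1.2 (Submodule.mem_sup_right (Ideal.mem_span_singleton_self x))
  have hp1r : p1 < r :=
    lt_of_le_of_ne (le_sup_left.trans hr.1.2) fun h => hxnot p1 hp1F (h ▸ hxr)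
  -- r ≠ Q, via the principal ideal theorem in R ⧸ p1
  have hrneQ : r ≠ Q := by
    rintro rfl
    let g := Ideal.Quotient.mk p1
    have hsurj : Function.Surjective g := Ideal.Quotient.mk_surjective
    have hker : RingHom.ker g = p1 := Ideal.mk_ker
    have hp1r' : p1 ≤ r := l1.le.trans l2.le
    have hQbar : (Ideal.map g r).IsPrime :=
      Ideal.map_isPrime_of_surjective hsurj (by rw [hker]; exact hp1r')
    have hp2bar : (Ideal.map g p2).IsPrime :=
      Ideal.map_isPrime_of_surjective hsurj (by rw [hker]; exact l1.le)
    have hbotprime : (⊥ : Ideal (R ⧸ p1)).IsPrime := Ideal.bot_prime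
    have hcm : ∀ I : Ideal R, Ideal.comap g (Ideal.map g I) = I ⊔ p1 := by
      intro I
      rw [Ideal.comap_map_of_surjective g hsurj, ← RingHom.ker_eq_comap_bot, hker]
    have hQmin : Ideal.map g r ∈ (Ideal.span {g x}).minimalPrimes := by
      constructor
      · exact ⟨hQbar, by rw [Ideal.span_singleton_le_iff_mem]; exact Ideal.mem_map_of_mem g hxQ⟩
      · rintro Qb ⟨hQb, hxQb⟩ hQble
        have hp1Q0 : p1 ≤ Qb.comap g := fun y hy => by
          rw [Ideal.mem_comap, show g y = 0 from Ideal.Quotient.eq_zero_iff_mem.mpr hy]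
          exact Qb.zero_mem
        have hIQ0 : p1 ⊔ Ideal.span {x} ≤ Qb.comap g := by
          refine sup_le hp1Q0 ?_
          rw [Ideal.span_singleton_le_iff_mem]
          exact hxQb (Ideal.mem_span_singleton_self (g x))
        have hQ0Q : Qb.comap g ≤ r := by
          have h' := Ideal.comap_mono (f := g) hQble
          rwa [hcm, sup_eq_left.mpr hp1r'] at h'
        have hQQ0 : r ≤ Qb.comap g := hr.2 ⟨hQb.comap g, hIQ0⟩ hQ0Q
        calc Ideal.map g r ≤ Ideal.map g (Qb.comap g) := Ideal.map_mono hQQ0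
          _ ≤ Qb := Ideal.map_comap_le
    have hbotlt : (⊥ : Ideal (R ⧸ p1)) < Ideal.map g p2 := by
      rw [bot_lt_iff_ne_bot]
      intro h
      have h' := congrArg (Ideal.comap g) h
      rw [hcm, ← RingHom.ker_eq_comap_bot, hker] at h'
      exact l1.not_ge (le_sup_left.trans h'.le)
    have hp2lt : Ideal.map g p2 < Ideal.map g r := by
      refine lt_of_le_of_ne (Ideal.map_mono l2.le) fun h => l2.ne ?_
      have h' := congrArg (Ideal.comap g) h
      rwa [hcm, hcm, sup_eq_left.mpr l1.le, sup_eq_left.mpr hp1r'] at h'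
    exact pit (g x) hQmin hp2bar hbotprime hp2lt hbotlt
  have hrT : r ∈ F := by
    rw [hF, Set.Finite.mem_toFinset]
    exact Or.inl ⟨hrprime, hp1r, lt_of_le_of_ne hrQ hrneQ⟩
  exact hxnot r hrT hxr

/-- In a Noetherian local ring of Krull dimension at least `3`, below any prime ideal `q`
of height `3` there are infinitely many prime ideals of height `2`. -/
theorem infinitely_many_height_two_primes (R : Type*) [CommRing R] [IsNoetherianRing R]
    [IsLocalRing R] (hdim : 3 ≤ ringKrullDim R)
    (q : PrimeSpectrum R) (hq : Order.height q = 3) :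
    {p : PrimeSpectrum R | p.asIdeal ≤ q.asIdeal ∧ Order.height p = 2}.Infinite := by
  obtain ⟨c, hlast, hlen⟩ := Order.exists_series_of_le_height q (n := 3) (by rw [hq]; exact_mod_cast le_rfl)
  let i1 : Fin (c.length + 1) := ⟨1, by omega⟩
  let i2 : Fin (c.length + 1) := ⟨2, by omega⟩
  set p1 := c i1 with hp1
  set p2 := c i2 with hp2
  have hp12 : p1 < p2 := c.strictMono (show i1 < i2 by simp [i1, i2, Fin.lt_def])
  have hp2q : p2 < q := by
    rw [← hlast]
    rw [RelSeries.last]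
    exact c.strictMono (show i2 < Fin.last c.length by simp [i2, Fin.lt_def, hlen])
  have hp1q : p1 < q := hp12.trans hp2q
  have h1le : (1 : ℕ∞) ≤ Order.height p1 := by
    have := Order.index_le_height c i1
    simpa [i1] using this
  have hqtop : Order.height q < ⊤ := by
    rw [hq]; exact lt_top_iff_ne_top.mpr (by decide)
  -- heights of intermediate primes
  have hA : {r : Ideal R | r.IsPrime ∧ p1.asIdeal < r ∧ r < q.asIdeal}.Infinite :=
    infinite_primes_between p1.isPrime p2.isPrime q.isPrime hp12 hp2q
  haveI : Infinite {r : Ideal R | r.IsPrime ∧ p1.asIdeal < r ∧ r < q.asIdeal} :=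
    Set.infinite_coe_iff.mpr hA
  apply Set.infinite_of_injective_forall_mem
    (f := fun r : {r : Ideal R | r.IsPrime ∧ p1.asIdeal < r ∧ r < q.asIdeal} =>
      (⟨r.1, r.2.1⟩ : PrimeSpectrum R))
  · intro a b h
    exact Subtype.ext (congrArg PrimeSpectrum.asIdeal h)
  · rintro ⟨r, hrp, hr1, hr2⟩
    dsimp only
    set pr : PrimeSpectrum R := ⟨r, hrp⟩ with hpr
    have hlt1 : p1 < pr := hr1
    have hlt2 : pr < q := hr2
    refine ⟨hlt2.le, ?_⟩
    have hfin1 : Order.height p1 < ⊤ := lt_of_le_of_lt (Order.height_mono hp1q.le) hqtop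
    have hfinr : Order.height pr < ⊤ := lt_of_le_of_lt (Order.height_mono hlt2.le) hqtop
    have h2le : (2 : ℕ∞) ≤ Order.height pr := by
      have hs := Order.height_strictMono hlt1 hfin1
      have := (ENat.add_one_le_iff hfin1.ne).mpr hs
      calc (2 : ℕ∞) = 1 + 1 := by norm_num
        _ ≤ Order.height p1 + 1 := add_le_add_left h1le 1
        _ ≤ Order.height pr := this
    have hlt3 : Order.height pr < 3 := by
      have := Order.height_strictMono hlt2 hfinr
      rwa [hq] at this
    have hle2 : Order.height pr ≤ 2 := by
      refine (ENat.lt_add_one_iff (by decide)).mp ?_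
      have h23 : (3:ℕ∞) = 2 + 1 := by norm_num
      rw [← h23]
      exact hlt3
    exact le_antisymm hle2 h2le
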